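/- Truncated conditional mean of a decreasing function is decreasing (key step in the proof of Lemma 1). Let λ > 0 and let h : ℝ → ℝ be antitone on (0, ∞) with g ↦ h(g)·e^{−λg} integrable on (0, ∞). Then the map G ↦ (∫_G^∞ h(g)·e^{−λg} dg) / (∫_G^∞ e^{−λg} dg) is antitone on (0, ∞). -/

import Mathlib

open MeasureTheory Set

lemma exp_int_pos (lam : ℝ) (hlam : 0 < lam) {s : Set ℝ} (hs : MeasurableSet s)
    (hpos : 0 < volume s) (hint : IntegrableOn (fun g => Real.exp (-lam * g)) s) :
    0 < ∫ g in s, Real.exp (-lam * g) := by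
  rw [setIntegral_pos_iff_support_of_nonneg_ae]
  · have : Function.support (fun g => Real.exp (-lam * g)) = univ := by
      ext x; simp [Function.support, Real.exp_ne_zero]
    rw [this]
    simpa using hpos
  · filter_upwards with x using (Real.exp_pos _).le
  · exact hint

/-- Truncated conditional mean of a decreasing function is decreasing (key step of Lemma 1):
if `h` is antitone on `(0, ∞)` and `g ↦ h(g)·e^{−λg}` is integrable on `(0, ∞)`, then
`G ↦ (∫_G^∞ h(g)·e^{−λg} dg) / (∫_G^∞ e^{−λg} dg)` is antitone on `(0, ∞)`. -/
theorem truncated_conditional_mean_antitone (lam : ℝ) (hlam : 0 < lam)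
    (h : ℝ → ℝ) (hmono : AntitoneOn h (Set.Ioi 0))
    (hint : MeasureTheory.IntegrableOn (fun g => h g * Real.exp (-lam * g)) (Set.Ioi 0)) :
    AntitoneOn
      (fun G : ℝ => (∫ g in Set.Ioi G, h g * Real.exp (-lam * g)) /
        (∫ g in Set.Ioi G, Real.exp (-lam * g)))
      (Set.Ioi 0) := by
  intro a ha b hb hab
  rcases eq_or_lt_of_le hab with rfl | hab
  · exact le_refl _
  have ha' : (0:ℝ) < a := ha
  have hb' : (0:ℝ) < b := hb
  -- integrability facts
  have hexp : ∀ c : ℝ, IntegrableOn (fun g => Real.exp (-lam * g)) (Ioi c) := fun c =>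
    exp_neg_integrableOn_Ioi c hlam
  have hexp1 : IntegrableOn (fun g => Real.exp (-lam * g)) (Ioc a b) :=
    (hexp a).mono_set Ioc_subset_Ioi_self
  have hhe2 : IntegrableOn (fun g => h g * Real.exp (-lam * g)) (Ioi b) :=
    hint.mono_set (Ioi_subset_Ioi hb'.le)
  have hhe1 : IntegrableOn (fun g => h g * Real.exp (-lam * g)) (Ioc a b) :=
    (hint.mono_set (Ioi_subset_Ioi ha'.le)).mono_set Ioc_subset_Ioi_self
  set N1 := ∫ g in Ioc a b, h g * Real.exp (-lam * g)
  set N2 := ∫ g in Ioi b, h g * Real.exp (-lam * g)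
  set D1 := ∫ g in Ioc a b, Real.exp (-lam * g)
  set D2 := ∫ g in Ioi b, Real.exp (-lam * g)
  have hD1 : 0 < D1 := by
    refine exp_int_pos lam hlam measurableSet_Ioc ?_ hexp1
    rw [Real.volume_Ioc]
    simp [hab]
  have hD2 : 0 < D2 := by
    refine exp_int_pos lam hlam measurableSet_Ioi ?_ (hexp b)
    rw [Real.volume_Ioi]; simp
  -- split integrals over Ioi a
  have hsplitN : (∫ g in Ioi a, h g * Real.exp (-lam * g)) = N1 + N2 := by
    rw [← setIntegral_union (Ioc_disjoint_Ioi le_rfl) measurableSet_Ioi hhe1 hhe2,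
      Ioc_union_Ioi_eq_Ioi hab.le]
  have hsplitD : (∫ g in Ioi a, Real.exp (-lam * g)) = D1 + D2 := by
    rw [← setIntegral_union (Ioc_disjoint_Ioi le_rfl) measurableSet_Ioi hexp1 (hexp b),
      Ioc_union_Ioi_eq_Ioi hab.le]
  -- key inequalities
  have hN1 : h b * D1 ≤ N1 := by
    rw [← integral_const_mul]
    refine setIntegral_mono_on (hexp1.const_mul _) hhe1 measurableSet_Ioc ?_
    intro x hx
    have : h b ≤ h x :=
      hmono (lt_trans ha' hx.1) hb' hx.2
    exact mul_le_mul_of_nonneg_right this (Real.exp_pos _).le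
  have hN2 : N2 ≤ h b * D2 := by
    rw [← integral_const_mul]
    refine setIntegral_mono_on hhe2 ((hexp b).const_mul _) measurableSet_Ioi ?_
    intro x hx
    have : h x ≤ h b := hmono hb' (lt_trans hb' hx) (le_of_lt hx)
    exact mul_le_mul_of_nonneg_right this (Real.exp_pos _).le
  -- conclude
  simp only [hsplitN, hsplitD]
  rw [div_le_div_iff₀ hD2 (by linarith)]
  nlinarith [mul_le_mul_of_nonneg_right hN2 hD1.le, mul_le_mul_of_nonneg_right hN1 hD2.le]
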